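/- Let V, V' : ℤ^d → ℝ (d ≥ 3) be finitely supported with ‖G|V|‖_∞ < 1, ‖G|V'|‖_∞ < 1, and additionally ‖(I − G|V|)^{-1} G|V' − V|‖_∞ < 1. Then γ_{V'} = (I − (I − GV)^{-1} G (V' − V))^{-1} γ_V. -/

import Mathlib

open scoped BigOperators

noncomputable section

/-- Points of the lattice `ℤ^d`. -/
abbrev Zd (d : ℕ) := Fin d → ℤ

/-- One-step transition kernel of simple random walk on `ℤ^d`. -/
def srwStep (d : ℕ) (x y : Zd d) : ℝ :=
  if (∑ i, |x i - y i|) = 1 then 1 / (2 * (d : ℝ)) else 0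

/-- `n`-step transition probabilities of simple random walk on `ℤ^d`. -/
def srwP (d : ℕ) : ℕ → Zd d → Zd d → ℝ
  | 0, x, y => if x = y then 1 else 0
  | n + 1, x, y => ∑' z : Zd d, srwP d n x z * srwStep d z y

/-- Green function of the (continuous-time) simple random walk on `ℤ^d`,
`g(x,y) = E_x[∫_0^∞ 1{X_s = y} ds] = ∑_n p_n(x,y)`. -/
def green (d : ℕ) (x y : Zd d) : ℝ := ∑' n : ℕ, srwP d n x y

/-- The Green operator `G f (x) = ∑_y g(x,y) f(y)`. -/
def Gop (d : ℕ) (f : Zd d → ℝ) (x : Zd d) : ℝ := ∑' y : Zd d, green d x y * f y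

/-- The operator `GV : f ↦ G(V·f)` (composition of `G` with multiplication by `V`). -/
def GVop (d : ℕ) (V f : Zd d → ℝ) : Zd d → ℝ := Gop d fun y => V y * f y

/-- Neumann series representation of `(I - GV)⁻¹` applied to `h`
(valid when the operator norm `‖G|V|‖_∞` is `< 1`). -/
def neumann (d : ℕ) (V h : Zd d → ℝ) (x : Zd d) : ℝ := ∑' n : ℕ, (GVop d V)^[n] h x

/-- The gaugeFn function `γ_V = (I - GV)⁻¹ 1`. -/
def gaugeFn (d : ℕ) (V : Zd d → ℝ) : Zd d → ℝ := neumann d V fun _ => 1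

/-- The condition `‖G|V|‖_∞ < 1`. -/
def greenNormLtOne (d : ℕ) (V : Zd d → ℝ) : Prop :=
  ∃ c : ℝ, c < 1 ∧ ∀ x, Gop d (fun y => |V y|) x ≤ c

/-- The pairing `⟨u,v⟩_{ℤ^d} = ∑_z u(z) v(z)`. -/
def pairZ (d : ℕ) (u v : Zd d → ℝ) : ℝ := ∑' z : Zd d, u z * v z

/-- The discrete Dirichlet form `𝓔_{ℤ^d}(f,g) = (1/(4d)) ∑_{x∼y} (f(y)-f(x))(g(y)-g(x))`. -/
def dirichletZ (d : ℕ) (f g : Zd d → ℝ) : ℝ :=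
  (1 / (4 * (d : ℝ))) * ∑' p : Zd d × Zd d,
    if (∑ i, |p.1 i - p.2 i|) = 1 then (f p.2 - f p.1) * (g p.2 - g p.1) else 0

/-- The sup norm `‖f‖_∞` of a function on `ℤ^d`. -/
def supNorm (d : ℕ) (f : Zd d → ℝ) : ℝ := ⨆ x, |f x|

lemma GP_srwStep_nonneg (d : ℕ) (x y : Zd d) : 0 ≤ srwStep d x y := by
  unfold srwStep; split_ifs <;> positivity

lemma GP_srwP_nonneg (d : ℕ) (n : ℕ) (x y : Zd d) : 0 ≤ srwP d n x y := by
  induction n generalizing x y with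
  | zero => simp only [srwP]; split_ifs <;> norm_num
  | succ n ih =>
      simp only [srwP]
      exact tsum_nonneg fun z => mul_nonneg (ih x z) (GP_srwStep_nonneg d z y)

lemma GP_green_nonneg (d : ℕ) (x y : Zd d) : 0 ≤ green d x y :=
  tsum_nonneg fun n => GP_srwP_nonneg d n x y

lemma GP_Gop_nonneg {d : ℕ} {u : Zd d → ℝ} (hu : ∀ y, 0 ≤ u y) (x : Zd d) :
    0 ≤ Gop d u x :=
  tsum_nonneg fun y => mul_nonneg (GP_green_nonneg d x y) (hu y)

lemma GP_Gop_eq_sum {d : ℕ} {u : Zd d → ℝ} {s : Finset (Zd d)}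
    (hs : ∀ y, u y ≠ 0 → y ∈ s) (x : Zd d) :
    Gop d u x = ∑ y ∈ s, green d x y * u y := by
  refine tsum_eq_sum fun y hy => ?_
  have : u y = 0 := by by_contra h; exact hy (hs y h)
  simp [this]

lemma GP_GVop_eq_sum {d : ℕ} {W : Zd d → ℝ} {s : Finset (Zd d)}
    (hs : ∀ y, W y ≠ 0 → y ∈ s) (f : Zd d → ℝ) (x : Zd d) :
    GVop d W f x = ∑ y ∈ s, green d x y * (W y * f y) :=
  GP_Gop_eq_sum (fun y hy => hs y fun h => hy (by rw [h, zero_mul])) x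

lemma GP_abs_GVop_le {d : ℕ} {W : Zd d → ℝ} {s : Finset (Zd d)}
    (hs : ∀ y, W y ≠ 0 → y ∈ s) {f g : Zd d → ℝ} (hfg : ∀ y, |f y| ≤ g y) (x : Zd d) :
    |GVop d W f x| ≤ GVop d (fun y => |W y|) g x := by
  rw [GP_GVop_eq_sum hs, GP_GVop_eq_sum (fun y hy => hs y (abs_ne_zero.mp hy))]
  refine (Finset.abs_sum_le_sum_abs _ _).trans (Finset.sum_le_sum fun y _ => ?_)
  rw [abs_mul, abs_mul, abs_of_nonneg (GP_green_nonneg d x y)]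
  exact mul_le_mul_of_nonneg_left
    (mul_le_mul_of_nonneg_left (hfg y) (abs_nonneg _)) (GP_green_nonneg d x y)

lemma GP_GVop_const {d : ℕ} (W : Zd d → ℝ) (a : ℝ) (x : Zd d) :
    GVop d W (fun _ => a) x = a * Gop d W x := by
  unfold GVop Gop
  rw [← tsum_mul_left]
  exact tsum_congr fun y => by ring

lemma GP_GVop_const_mul {d : ℕ} (W : Zd d → ℝ) (a : ℝ) (u : Zd d → ℝ) (x : Zd d) :
    GVop d W (fun y => a * u y) x = a * GVop d W u x := by
  unfold GVop Gop
  rw [← tsum_mul_left]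
  exact tsum_congr fun y => by ring

lemma GP_GVop_add {d : ℕ} {W : Zd d → ℝ} {s : Finset (Zd d)}
    (hs : ∀ y, W y ≠ 0 → y ∈ s) (u v : Zd d → ℝ) (x : Zd d) :
    GVop d W (fun y => u y + v y) x = GVop d W u x + GVop d W v x := by
  rw [GP_GVop_eq_sum hs, GP_GVop_eq_sum hs, GP_GVop_eq_sum hs, ← Finset.sum_add_distrib]
  exact Finset.sum_congr rfl fun y _ => by ring

lemma GP_GVop_sub {d : ℕ} {W : Zd d → ℝ} {s : Finset (Zd d)}
    (hs : ∀ y, W y ≠ 0 → y ∈ s) (u v : Zd d → ℝ) (x : Zd d) :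
    GVop d W (fun y => u y - v y) x = GVop d W u x - GVop d W v x := by
  rw [GP_GVop_eq_sum hs, GP_GVop_eq_sum hs, GP_GVop_eq_sum hs, ← Finset.sum_sub_distrib]
  exact Finset.sum_congr rfl fun y _ => by ring

lemma GP_GVop_tsum {d : ℕ} {W : Zd d → ℝ} {s : Finset (Zd d)}
    (hs : ∀ y, W y ≠ 0 → y ∈ s) {u : ℕ → Zd d → ℝ}
    (hsum : ∀ y, Summable fun k => u k y) (x : Zd d) :
    GVop d W (fun y => ∑' k, u k y) x = ∑' k, GVop d W (u k) x := by
  rw [GP_GVop_eq_sum hs]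
  rw [show (∑' k, GVop d W (u k) x) = ∑' k, ∑ y ∈ s, green d x y * (W y * u k y) from
    tsum_congr fun k => GP_GVop_eq_sum hs (u k) x]
  rw [Summable.tsum_finsetSum fun y _ => ((hsum y).mul_left (W y)).mul_left (green d x y)]
  refine Finset.sum_congr rfl fun y _ => ?_
  rw [tsum_mul_left, tsum_mul_left]

lemma GP_GVop_nonneg {d : ℕ} {A g : Zd d → ℝ} (hA : ∀ y, 0 ≤ A y)
    (hg : ∀ y, 0 ≤ g y) (x : Zd d) : 0 ≤ GVop d A g x :=
  tsum_nonneg fun y => mul_nonneg (GP_green_nonneg d x y) (mul_nonneg (hA y) (hg y))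

lemma GP_iter_nonneg {d : ℕ} {A : Zd d → ℝ} (hA : ∀ y, 0 ≤ A y) {g : Zd d → ℝ}
    (hg : ∀ y, 0 ≤ g y) : ∀ n x, 0 ≤ (GVop d A)^[n] g x := by
  intro n
  induction n with
  | zero => simpa using hg
  | succ n ih =>
      intro x
      rw [Function.iterate_succ_apply']
      exact GP_GVop_nonneg hA ih x

section GPcore
variable {d : ℕ} {V : Zd d → ℝ} {s : Finset (Zd d)} {c : ℝ}

lemma GP_iter_abs_le (hsV : ∀ y, V y ≠ 0 → y ∈ s) {f g : Zd d → ℝ}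
    (hfg : ∀ y, |f y| ≤ g y) : ∀ n x,
    |(GVop d V)^[n] f x| ≤ (GVop d (fun y => |V y|))^[n] g x := by
  intro n
  induction n with
  | zero => simpa using hfg
  | succ n ih =>
      intro x
      rw [Function.iterate_succ_apply', Function.iterate_succ_apply']
      exact GP_abs_GVop_le hsV ih x

lemma GP_iter_const_mul (A : Zd d → ℝ) (a : ℝ) (u : Zd d → ℝ) :
    ∀ n x, (GVop d A)^[n] (fun y => a * u y) x = a * (GVop d A)^[n] u x := by
  intro n
  induction n with
  | zero => intro x; rfl
  | succ n ih =>
      intro x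
      rw [Function.iterate_succ_apply', Function.iterate_succ_apply']
      rw [show (GVop d A)^[n] (fun y => a * u y) = fun y => a * (GVop d A)^[n] u y from
        funext fun y => ih y]
      exact GP_GVop_const_mul A a _ x

lemma GP_iter_bound (hsV : ∀ y, V y ≠ 0 → y ∈ s)
    (hVc : ∀ x, Gop d (fun y => |V y|) x ≤ c) {f : Zd d → ℝ} {M : ℝ}
    (hf : ∀ y, |f y| ≤ M) : ∀ n x, |(GVop d V)^[n] f x| ≤ M * c ^ n := by
  have hc0 : 0 ≤ c := le_trans (GP_Gop_nonneg (fun y => abs_nonneg _) (fun _ => 0))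
    (hVc (fun _ => 0))
  have hM0 : 0 ≤ M := le_trans (abs_nonneg _) (hf (fun _ => 0))
  intro n
  induction n with
  | zero => intro x; simpa using hf x
  | succ n ih =>
      intro x
      rw [Function.iterate_succ_apply']
      calc |GVop d V ((GVop d V)^[n] f) x|
          ≤ GVop d (fun y => |V y|) (fun _ => M * c ^ n) x := GP_abs_GVop_le hsV ih x
        _ = (M * c ^ n) * Gop d (fun y => |V y|) x := GP_GVop_const _ _ x
        _ ≤ (M * c ^ n) * c := by
            exact mul_le_mul_of_nonneg_left (hVc x) (by positivity)
        _ = M * c ^ (n + 1) := by ring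

lemma GP_summable_iter (hsV : ∀ y, V y ≠ 0 → y ∈ s)
    (hVc : ∀ x, Gop d (fun y => |V y|) x ≤ c) (hc1 : c < 1) {f : Zd d → ℝ} {M : ℝ}
    (hf : ∀ y, |f y| ≤ M) (x : Zd d) : Summable fun n => (GVop d V)^[n] f x := by
  have hc0 : 0 ≤ c := le_trans (GP_Gop_nonneg (fun y => abs_nonneg _) (fun _ => 0))
    (hVc (fun _ => 0))
  refine Summable.of_norm_bounded
    ((summable_geometric_of_lt_one hc0 hc1).mul_left M) (fun n => ?_)
  simpa [Real.norm_eq_abs] using GP_iter_bound hsV hVc hf n x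

lemma GP_abs_neumann_le (hsV : ∀ y, V y ≠ 0 → y ∈ s)
    (hVc : ∀ x, Gop d (fun y => |V y|) x ≤ c) (hc1 : c < 1) {f : Zd d → ℝ} {M : ℝ}
    (hf : ∀ y, |f y| ≤ M) (x : Zd d) : |neumann d V f x| ≤ M * (1 - c)⁻¹ := by
  have hc0 : 0 ≤ c := le_trans (GP_Gop_nonneg (fun y => abs_nonneg _) (fun _ => 0))
    (hVc (fun _ => 0))
  have hsum := GP_summable_iter hsV hVc hc1 hf x
  have habs : Summable fun n => |(GVop d V)^[n] f x| := hsum.abs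
  calc |neumann d V f x| ≤ ∑' n, |(GVop d V)^[n] f x| := by
        simpa [Real.norm_eq_abs, neumann] using
          norm_tsum_le_tsum_norm (f := fun n => (GVop d V)^[n] f x)
            (by simpa [Real.norm_eq_abs] using habs)
    _ ≤ ∑' n, M * c ^ n := Summable.tsum_le_tsum (fun n => GP_iter_bound hsV hVc hf n x) habs
        ((summable_geometric_of_lt_one hc0 hc1).mul_left M)
    _ = M * (1 - c)⁻¹ := by rw [tsum_mul_left, tsum_geometric_of_lt_one hc0 hc1]

lemma GP_neumann_fixed (hsV : ∀ y, V y ≠ 0 → y ∈ s)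
    (hVc : ∀ x, Gop d (fun y => |V y|) x ≤ c) (hc1 : c < 1) {h : Zd d → ℝ} {M : ℝ}
    (hh : ∀ y, |h y| ≤ M) (x : Zd d) :
    neumann d V h x = h x + GVop d V (fun y => neumann d V h y) x := by
  have hsum : ∀ y, Summable fun n => (GVop d V)^[n] h y :=
    fun y => GP_summable_iter hsV hVc hc1 hh y
  unfold neumann
  rw [Summable.tsum_eq_zero_add (hsum x)]
  simp only [Function.iterate_zero_apply]
  congr 1
  rw [GP_GVop_tsum hsV hsum x]
  exact tsum_congr fun n => by rw [Function.iterate_succ_apply']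

lemma GP_iter_tsum (hsV : ∀ y, V y ≠ 0 → y ∈ s)
    (hVc : ∀ x, Gop d (fun y => |V y|) x ≤ c)
    {u : ℕ → Zd d → ℝ} {b : ℕ → ℝ} (hb : Summable b)
    (hub : ∀ k y, |u k y| ≤ b k) : ∀ n x,
    (GVop d V)^[n] (fun y => ∑' k, u k y) x = ∑' k, (GVop d V)^[n] (u k) x := by
  intro n
  induction n with
  | zero => intro x; rfl
  | succ n ih =>
      intro x
      rw [Function.iterate_succ_apply']
      rw [show (GVop d V)^[n] (fun y => ∑' k, u k y)
          = fun y => ∑' k, (GVop d V)^[n] (u k) y from funext fun y => ih y]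
      rw [GP_GVop_tsum hsV (fun y => ?_) x]
      · exact tsum_congr fun k => by rw [Function.iterate_succ_apply']
      · refine Summable.of_norm_bounded (hb.mul_right (c ^ n)) (fun k => ?_)
        simpa [Real.norm_eq_abs] using GP_iter_bound hsV hVc (hub k) n y

lemma GP_neumann_tsum (hsV : ∀ y, V y ≠ 0 → y ∈ s)
    (hVc : ∀ x, Gop d (fun y => |V y|) x ≤ c) (hc1 : c < 1)
    {u : ℕ → Zd d → ℝ} {b : ℕ → ℝ} (hb : Summable b)
    (hub : ∀ k y, |u k y| ≤ b k) (x : Zd d) :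
    neumann d V (fun y => ∑' k, u k y) x = ∑' k, neumann d V (u k) x := by
  have hc0 : 0 ≤ c := le_trans (GP_Gop_nonneg (fun y => abs_nonneg _) (fun _ => 0))
    (hVc (fun _ => 0))
  have hb0 : ∀ k, 0 ≤ b k := fun k => le_trans (abs_nonneg _) (hub k (fun _ => 0))
  unfold neumann
  rw [tsum_congr fun n => GP_iter_tsum hsV hVc hb hub n x]
  exact Summable.tsum_comm (Summable.of_norm_bounded
    (hb.mul_of_nonneg (summable_geometric_of_lt_one hc0 hc1) hb0
      (fun n => pow_nonneg hc0 n))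
    (fun p => by simpa [Real.norm_eq_abs, Function.uncurry_def] using GP_iter_bound hsV hVc (hub p.1) p.2 x))

end GPcore

/-- Explicit perturbation formula:
`γ_{V'} = (I − (I − GV)⁻¹ G(V' − V))⁻¹ γ_V`, where the outer inverse is given by its
Neumann series (justified by the hypothesis `‖(I − G|V|)⁻¹ G|V' − V|‖_∞ < 1`). -/
theorem gauge_perturbation_explicit (d : ℕ) (hd : 3 ≤ d) (V V' : Zd d → ℝ)
    (hVfin : (Function.support V).Finite) (hV'fin : (Function.support V').Finite)
    (hV : greenNormLtOne d V) (hV' : greenNormLtOne d V')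
    (hinv : ∃ c : ℝ, c < 1 ∧
      ∀ x, neumann d (fun y => |V y|) (Gop d fun y => |V' y - V y|) x ≤ c) :
    ∀ x, gaugeFn d V' x
      = ∑' n : ℕ,
          (fun f : Zd d → ℝ => neumann d V (Gop d fun y => (V' y - V y) * f y))^[n]
            (gaugeFn d V) x := by
  obtain ⟨c, hc1, hVc⟩ := hV
  obtain ⟨c', hc'1, hV'c⟩ := hV'
  obtain ⟨c'', hc''1, hinvc⟩ := hinv
  intro x₀
  set T : (Zd d → ℝ) → Zd d → ℝ :=
    fun f : Zd d → ℝ => neumann d V (Gop d fun y => (V' y - V y) * f y) with hTdef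
  set S : Zd d → ℝ := fun x => ∑' k : ℕ, T^[k] (gaugeFn d V) x with hSdef
  -- support finset
  set s : Finset (Zd d) := (hVfin.union hV'fin).toFinset with hsdef
  have hsV : ∀ y, V y ≠ 0 → y ∈ s := fun y hy =>
    (Set.Finite.mem_toFinset _).2 (Or.inl hy)
  have hsV' : ∀ y, V' y ≠ 0 → y ∈ s := fun y hy =>
    (Set.Finite.mem_toFinset _).2 (Or.inr hy)
  have hsW : ∀ y, (fun z => V' z - V z) y ≠ 0 → y ∈ s := by
    intro y hy
    refine (Set.Finite.mem_toFinset _).2 ?_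
    by_cases h : V y = 0
    · exact Or.inr fun h' => hy (by simp [h, h'])
    · exact Or.inl h
  have hsVabs : ∀ y, |V y| ≠ 0 → y ∈ s := fun y hy => hsV y (abs_ne_zero.mp hy)
  have hVcabs : ∀ x, Gop d (fun y => |(|V y|)|) x ≤ c := fun x => by
    simpa [abs_abs] using hVc x
  -- nonnegativity of constants
  have hc0 : 0 ≤ c := le_trans (GP_Gop_nonneg (fun y => abs_nonneg _) (fun _ => 0))
    (hVc (fun _ => 0))
  have hc'0 : 0 ≤ c' := le_trans (GP_Gop_nonneg (fun y => abs_nonneg _) (fun _ => 0))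
    (hV'c (fun _ => 0))
  have hc''0 : 0 ≤ c'' := by
    refine le_trans ?_ (hinvc (fun _ => 0))
    exact tsum_nonneg fun n => GP_iter_nonneg (fun y => abs_nonneg _)
      (fun y => GP_Gop_nonneg (fun z => abs_nonneg _) y) n _
  -- bound on G|V'-V|
  have hcW : ∀ x, Gop d (fun y => |V' y - V y|) x ≤ c + c' := by
    intro x
    rw [GP_Gop_eq_sum (fun y hy => hsW y (abs_ne_zero.mp hy)) x]
    calc ∑ y ∈ s, green d x y * |V' y - V y|
        ≤ ∑ y ∈ s, (green d x y * |V y| + green d x y * |V' y|) :=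
          Finset.sum_le_sum fun y _ => by
            have h2 : |V' y - V y| ≤ |V y| + |V' y| := by
              have := abs_sub (V' y) (V y)
              linarith [this]
            have h3 := mul_le_mul_of_nonneg_left h2 (GP_green_nonneg d x y)
            nlinarith [h3]
      _ = (∑ y ∈ s, green d x y * |V y|) + ∑ y ∈ s, green d x y * |V' y| :=
          Finset.sum_add_distrib
      _ ≤ c + c' := by
          rw [← GP_Gop_eq_sum (fun y hy => hsV y (abs_ne_zero.mp hy)) x,
              ← GP_Gop_eq_sum (fun y hy => hsV' y (abs_ne_zero.mp hy)) x]
          exact add_le_add (hVc x) (hV'c x)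
  -- gauge bounds and fixed point
  have hγbd : ∀ x, |gaugeFn d V x| ≤ 1 * (1 - c)⁻¹ := fun x =>
    GP_abs_neumann_le hsV hVc hc1 (fun y => by norm_num) x
  have hMγ0 : 0 ≤ (1 : ℝ) * (1 - c)⁻¹ :=
    le_trans (abs_nonneg _) (hγbd (fun _ => 0))
  have hγfix : ∀ x, gaugeFn d V x = 1 + GVop d V (gaugeFn d V) x := fun x =>
    GP_neumann_fixed hsV hVc hc1 (h := fun _ => (1:ℝ)) (M := 1) (fun y => by norm_num) x
  have hγ'bd : ∀ x, |gaugeFn d V' x| ≤ 1 * (1 - c')⁻¹ := fun x =>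
    GP_abs_neumann_le hsV' hV'c hc'1 (fun y => by norm_num) x
  have hγ'fix : ∀ x, gaugeFn d V' x = 1 + GVop d V' (gaugeFn d V') x := fun x =>
    GP_neumann_fixed hsV' hV'c hc'1 (h := fun _ => (1:ℝ)) (M := 1) (fun y => by norm_num) x
  -- bound for T
  have hTbd : ∀ (f : Zd d → ℝ) (M : ℝ), (∀ y, |f y| ≤ M) → ∀ x, |T f x| ≤ M * c'' := by
    intro f M hf x
    have hM0 : 0 ≤ M := le_trans (abs_nonneg _) (hf (fun _ => 0))
    have hGWf : ∀ y, |GVop d (fun z => V' z - V z) f y|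
        ≤ M * Gop d (fun z => |V' z - V z|) y := by
      intro y
      have h := GP_abs_GVop_le hsW (g := fun _ => M) hf y
      rwa [GP_GVop_const] at h
    have hGWf2 : ∀ y, |GVop d (fun z => V' z - V z) f y| ≤ M * (c + c') :=
      fun y => le_trans (hGWf y) (mul_le_mul_of_nonneg_left (hcW y) hM0)
    have hq : ∀ n x, |(GVop d V)^[n] (GVop d (fun z => V' z - V z) f) x|
        ≤ M * (GVop d (fun z => |V z|))^[n] (Gop d fun z => |V' z - V z|) x := by
      intro n x
      have h := GP_iter_abs_le hsV
        (g := fun y => M * Gop d (fun z => |V' z - V z|) y) hGWf n x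
      rwa [GP_iter_const_mul] at h
    have hsum1 : Summable fun n => (GVop d V)^[n] (GVop d (fun z => V' z - V z) f) x :=
      GP_summable_iter hsV hVc hc1 hGWf2 x
    have hGopWbd : ∀ y, |Gop d (fun z => |V' z - V z|) y| ≤ c + c' := fun y => by
      rw [abs_of_nonneg (GP_Gop_nonneg (fun z => abs_nonneg _) y)]; exact hcW y
    have hsum2 : Summable fun n =>
        (GVop d (fun z => |V z|))^[n] (Gop d fun z => |V' z - V z|) x :=
      GP_summable_iter hsVabs hVcabs hc1 hGopWbd x
    show |neumann d V (GVop d (fun z => V' z - V z) f) x| ≤ M * c''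
    calc |neumann d V (GVop d (fun z => V' z - V z) f) x|
        ≤ ∑' n, |(GVop d V)^[n] (GVop d (fun z => V' z - V z) f) x| := by
          simpa [Real.norm_eq_abs, neumann] using norm_tsum_le_tsum_norm
            (f := fun n => (GVop d V)^[n] (GVop d (fun z => V' z - V z) f) x)
            (by simpa [Real.norm_eq_abs] using hsum1.abs)
      _ ≤ ∑' n, M * (GVop d (fun z => |V z|))^[n] (Gop d fun z => |V' z - V z|) x :=
          Summable.tsum_le_tsum (fun n => hq n x) hsum1.abs (hsum2.mul_left M)
      _ = M * neumann d (fun z => |V z|) (Gop d fun z => |V' z - V z|) x := by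
          rw [tsum_mul_left]; rfl
      _ ≤ M * c'' := mul_le_mul_of_nonneg_left (hinvc x) hM0
  -- iterate bound for T
  have hTiter : ∀ k x, |T^[k] (gaugeFn d V) x| ≤ (1 * (1 - c)⁻¹) * c'' ^ k := by
    intro k
    induction k with
    | zero => intro x; simpa using hγbd x
    | succ k ih =>
        intro x
        rw [Function.iterate_succ_apply']
        calc |T (T^[k] (gaugeFn d V)) x| ≤ ((1 * (1 - c)⁻¹) * c'' ^ k) * c'' :=
            hTbd _ _ ih x
          _ = (1 * (1 - c)⁻¹) * c'' ^ (k + 1) := by ring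
  have hSsum : ∀ x, Summable fun k => T^[k] (gaugeFn d V) x := fun x =>
    Summable.of_norm_bounded
      ((summable_geometric_of_lt_one hc''0 hc''1).mul_left _)
      (fun k => by simpa [Real.norm_eq_abs] using hTiter k x)
  have hSbd : ∀ x, |S x| ≤ (1 * (1 - c)⁻¹) * (1 - c'')⁻¹ := by
    intro x
    have habs : Summable fun k => |T^[k] (gaugeFn d V) x| := (hSsum x).abs
    calc |S x| ≤ ∑' k, |T^[k] (gaugeFn d V) x| := by
          simpa [Real.norm_eq_abs] using norm_tsum_le_tsum_norm
            (f := fun k => T^[k] (gaugeFn d V) x)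
            (by simpa [Real.norm_eq_abs] using habs)
      _ ≤ ∑' k, (1 * (1 - c)⁻¹) * c'' ^ k :=
          Summable.tsum_le_tsum (fun k => hTiter k x) habs
            ((summable_geometric_of_lt_one hc''0 hc''1).mul_left _)
      _ = (1 * (1 - c)⁻¹) * (1 - c'')⁻¹ := by
          rw [tsum_mul_left, tsum_geometric_of_lt_one hc''0 hc''1]
  -- T commutes with the tsum defining S
  have hbgeom : Summable fun k => (1 * (1 - c)⁻¹) * c'' ^ k :=
    (summable_geometric_of_lt_one hc''0 hc''1).mul_left _
  have hTtsum : ∀ x, T (fun y => ∑' k, T^[k] (gaugeFn d V) y) x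
      = ∑' k, T (T^[k] (gaugeFn d V)) x := by
    intro x
    show neumann d V (GVop d (fun z => V' z - V z)
        (fun y => ∑' k, T^[k] (gaugeFn d V) y)) x
      = ∑' k, neumann d V (GVop d (fun z => V' z - V z) (T^[k] (gaugeFn d V))) x
    rw [show GVop d (fun z => V' z - V z) (fun y => ∑' k, T^[k] (gaugeFn d V) y)
        = fun y => ∑' k, GVop d (fun z => V' z - V z) (T^[k] (gaugeFn d V)) y from
      funext fun y => GP_GVop_tsum hsW (fun z => hSsum z) y]
    refine GP_neumann_tsum hsV hVc hc1
      (b := fun k => ((1 * (1 - c)⁻¹) * c'' ^ k) * (c + c')) (hbgeom.mul_right _)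
      (fun k y => ?_) x
    have h := GP_abs_GVop_le hsW (g := fun _ => (1 * (1 - c)⁻¹) * c'' ^ k)
      (fun z => hTiter k z) y
    rw [GP_GVop_const] at h
    refine h.trans (mul_le_mul_of_nonneg_left (hcW y) ?_)
    positivity
  -- S is a fixed point
  have hSfix : ∀ x, S x = gaugeFn d V x + T S x := by
    intro x
    show (∑' k, T^[k] (gaugeFn d V) x) = gaugeFn d V x + T S x
    rw [Summable.tsum_eq_zero_add (hSsum x)]
    simp only [Function.iterate_zero_apply]
    congr 1
    calc (∑' k, T^[k + 1] (gaugeFn d V) x)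
        = ∑' k, T (T^[k] (gaugeFn d V)) x :=
          tsum_congr fun k => by rw [Function.iterate_succ_apply']
      _ = T (fun y => ∑' k, T^[k] (gaugeFn d V) y) x := (hTtsum x).symm
      _ = T S x := rfl
  -- fixed point equation for T S
  have hTSbd : ∀ y, |GVop d (fun z => V' z - V z) S y|
      ≤ ((1 * (1 - c)⁻¹) * (1 - c'')⁻¹) * (c + c') := by
    intro y
    have h := GP_abs_GVop_le hsW
      (g := fun _ => (1 * (1 - c)⁻¹) * (1 - c'')⁻¹) (fun z => hSbd z) y
    rw [GP_GVop_const] at h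
    refine h.trans (mul_le_mul_of_nonneg_left (hcW y) ?_)
    exact le_trans (abs_nonneg _) (hSbd (fun _ => 0))
  have hTSfix : ∀ x, T S x = GVop d (fun z => V' z - V z) S x + GVop d V (T S) x :=
    fun x => GP_neumann_fixed hsV hVc hc1 hTSbd x
  -- split of GV'
  have hGVsplit : ∀ (f : Zd d → ℝ) x,
      GVop d V' f x = GVop d V f x + GVop d (fun z => V' z - V z) f x := by
    intro f x
    rw [GP_GVop_eq_sum hsV' f x, GP_GVop_eq_sum hsV f x, GP_GVop_eq_sum hsW f x,
      ← Finset.sum_add_distrib]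
    exact Finset.sum_congr rfl fun y _ => by ring
  -- S satisfies the V' equation
  have hSfunGVop : ∀ x, GVop d V S x = GVop d V (gaugeFn d V) x + GVop d V (T S) x :=
    fun x =>
      (congrFun (congrArg (GVop d V)
        (funext hSfix : S = fun y => gaugeFn d V y + T S y)) x).trans
        (GP_GVop_add hsV (gaugeFn d V) (T S) x)
  have hSeq : ∀ x, S x = 1 + GVop d V' S x := by
    intro x
    calc S x = gaugeFn d V x + T S x := hSfix x
      _ = (1 + GVop d V (gaugeFn d V) x)
          + (GVop d (fun z => V' z - V z) S x + GVop d V (T S) x) := by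
            rw [← hγfix x, ← hTSfix x]
      _ = 1 + (GVop d V S x + GVop d (fun z => V' z - V z) S x) := by
            rw [hSfunGVop x]; ring
      _ = 1 + GVop d V' S x := by rw [← hGVsplit S x]
  -- uniqueness
  have hu : ∀ x, gaugeFn d V' x - S x
      = GVop d V' (fun y => gaugeFn d V' y - S y) x := by
    intro x
    rw [GP_GVop_sub hsV' (gaugeFn d V') S x]
    rw [hγ'fix x, hSeq x]
    ring
  have hM0 : 0 ≤ 1 * (1 - c')⁻¹ + (1 * (1 - c)⁻¹) * (1 - c'')⁻¹ :=
    le_trans (abs_nonneg _)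
      ((abs_sub _ _).trans (add_le_add (hγ'bd (fun _ => 0)) (hSbd (fun _ => 0))))
  have hkey : ∀ n x, |gaugeFn d V' x - S x|
      ≤ (1 * (1 - c')⁻¹ + (1 * (1 - c)⁻¹) * (1 - c'')⁻¹) * c' ^ n := by
    intro n
    induction n with
    | zero =>
        intro x
        simpa using (abs_sub _ _).trans (add_le_add (hγ'bd x) (hSbd x))
    | succ n ih =>
        intro x
        rw [hu x]
        calc |GVop d V' (fun y => gaugeFn d V' y - S y) x|
            ≤ GVop d (fun y => |V' y|) (fun _ =>
                (1 * (1 - c')⁻¹ + (1 * (1 - c)⁻¹) * (1 - c'')⁻¹) * c' ^ n) x :=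
              GP_abs_GVop_le hsV' (fun y => ih y) x
          _ = ((1 * (1 - c')⁻¹ + (1 * (1 - c)⁻¹) * (1 - c'')⁻¹) * c' ^ n)
              * Gop d (fun y => |V' y|) x := GP_GVop_const _ _ x
          _ ≤ ((1 * (1 - c')⁻¹ + (1 * (1 - c)⁻¹) * (1 - c'')⁻¹) * c' ^ n) * c' :=
              mul_le_mul_of_nonneg_left (hV'c x)
                (mul_nonneg hM0 (pow_nonneg hc'0 n))
          _ = (1 * (1 - c')⁻¹ + (1 * (1 - c)⁻¹) * (1 - c'')⁻¹) * c' ^ (n + 1) := by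
              ring
  have hlim : Filter.Tendsto
      (fun n => (1 * (1 - c')⁻¹ + (1 * (1 - c)⁻¹) * (1 - c'')⁻¹) * c' ^ n)
      Filter.atTop (nhds 0) := by
    simpa using
      (tendsto_pow_atTop_nhds_zero_of_lt_one hc'0 hc'1).const_mul
        (1 * (1 - c')⁻¹ + (1 * (1 - c)⁻¹) * (1 - c'')⁻¹)
  have hzero : |gaugeFn d V' x₀ - S x₀| ≤ 0 :=
    ge_of_tendsto' hlim (fun n => hkey n x₀)
  have hfinal : gaugeFn d V' x₀ = S x₀ := by
    have := abs_nonpos_iff.mp hzero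
    linarith [sub_eq_zero.mp this]
  exact hfinal
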